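/- Let A be a complete Heyting algebra and A′ ⊆ A a subalgebra containing 1, closed under ∧, ∨ and the Heyting implication of A, which is closed under all suprema and infima as computed in A. Then V^{A′} ⊆ V^A, and for every restricted negation-free sentence ψ(x₁,…,xₙ) with all name parameters x₁,…,xₙ in V^{A′}, the truth value of ψ computed in V^{A′} equals its truth value computed in V^A: ‖ψ(x₁,…,xₙ)‖^{A′} = ‖ψ(x₁,…,xₙ)‖^{A}. -/

import Mathlib

universe u


/-- The universe `V^A` of `A`-names over a complete Heyting algebra `A`:
an `A`-name is a function from a set (of previously constructed `A`-names)
into `A`, here encoded by an indexing type `ι`, a family `elts` of names and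
the family `val` of their attached truth values. -/
inductive HName (A : Type u) : Type (u + 1) where
  | mk (ι : Type u) (elts : ι → HName A) (val : ι → A)

namespace HName

variable {A : Type u}

/-- The indexing type of (the domain of) a name. -/
def ι : HName A → Type u
  | mk ι _ _ => ι

/-- The members of (the domain of) a name. -/
def elts : (u : HName A) → u.ι → HName A
  | mk _ e _ => e

/-- The values attached by a name to the members of its domain. -/
def val : (u : HName A) → u.ι → A
  | mk _ _ v => v

/-- Ordinal rank of a name (used for the recursive definition of truth values). -/
noncomputable def rank : HName A → Ordinal.{u}
  | mk _ e _ => Ordinal.lsub fun i => (e i).rank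

theorem rank_lt {ι : Type u} (e : ι → HName A) (v : ι → A) (i : ι) :
    (e i).rank < (mk ι e v).rank := Ordinal.lt_lsub _ i

variable [Order.Frame A]

/-- The truth value `‖u ≈ v‖` of equality of two names, defined by the recursion
`‖u ≈ v‖ = ⨅_{x ∈ dom u} (u(x) ⇨ ‖x ∈ v‖) ⊓ ⨅_{y ∈ dom v} (v(y) ⇨ ‖y ∈ u‖)`,
where `‖x ∈ v‖ = ⨆_{y ∈ dom v} (v(y) ⊓ ‖y ≈ x‖)` is inlined. -/
noncomputable def eqVal : HName A → HName A → A
  | mk ι e a, mk κ f b =>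
      (⨅ i, a i ⇨ ⨆ j, b j ⊓ eqVal (f j) (e i)) ⊓
      (⨅ j, b j ⇨ ⨆ i, a i ⊓ eqVal (e i) (f j))
termination_by u v => max u.rank v.rank
decreasing_by
  · exact max_lt (lt_max_of_lt_right (rank_lt f b j)) (lt_max_of_lt_left (rank_lt e a i))
  · exact max_lt (lt_max_of_lt_left (rank_lt e a i)) (lt_max_of_lt_right (rank_lt f b j))

/-- The truth value `‖u ∈ v‖ = ⨆_{x ∈ dom v} (v(x) ⊓ ‖x ≈ u‖)` of membership. -/
noncomputable def memVal (u v : HName A) : A :=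
  ⨆ j : v.ι, v.val j ⊓ eqVal (v.elts j) u

end HName


/-- Formulas of the pure first-order language of set theory (binary predicates
`∈` and `≈`, connectives `∧`, `∨`, `→`, quantifiers `∃`, `∀`; negation-free),
with free variables among `n` de Bruijn indices; quantifiers bind the last
variable of the context. -/
inductive SFml : Nat → Type where
  | mem {n} (i j : Fin n) : SFml n
  | eq {n} (i j : Fin n) : SFml n
  | and {n} (phi psi : SFml n) : SFml n
  | or {n} (phi psi : SFml n) : SFml n
  | imp {n} (phi psi : SFml n) : SFml n
  | ex {n} (phi : SFml (n + 1)) : SFml n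
  | all {n} (phi : SFml (n + 1)) : SFml n

/-- The compositional truth value of a negation-free formula in the name
universe, with the quantifiers ranging over the names satisfying `D` (taking
`D := fun _ => True` gives the interpretation in all of `V^A`). -/
noncomputable def SFml.valIn (A : Type u) [Order.Frame A] (D : HName A → Prop) :
    {n : Nat} → SFml n → (Fin n → HName A) → A
  | _, .mem i j, rho => HName.memVal (rho i) (rho j)
  | _, .eq i j, rho => HName.eqVal (rho i) (rho j)
  | _, .and phi psi, rho => valIn A D phi rho ⊓ valIn A D psi rho
  | _, .or phi psi, rho => valIn A D phi rho ⊔ valIn A D psi rho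
  | _, .imp phi psi, rho => valIn A D phi rho ⇨ valIn A D psi rho
  | _, .ex phi, rho => ⨆ v : {v : HName A // D v}, valIn A D phi (Fin.snoc rho v.1)
  | _, .all phi, rho => ⨅ v : {v : HName A // D v}, valIn A D phi (Fin.snoc rho v.1)

/-- A formula is restricted if all its quantifiers are bounded, i.e. of the
form `∃y(y∈x ∧ …)` or `∀y(y∈x → …)`. -/
inductive SFml.Restricted : {n : Nat} → SFml n → Prop where
  | mem {n} (i j : Fin n) : Restricted (.mem i j)
  | eq {n} (i j : Fin n) : Restricted (.eq i j)
  | and {n} {phi psi : SFml n} :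
      Restricted phi → Restricted psi → Restricted (.and phi psi)
  | or {n} {phi psi : SFml n} :
      Restricted phi → Restricted psi → Restricted (.or phi psi)
  | imp {n} {phi psi : SFml n} :
      Restricted phi → Restricted psi → Restricted (.imp phi psi)
  | bex {n} (i : Fin n) {phi : SFml (n + 1)} : Restricted phi →
      Restricted (.ex (.and (.mem (Fin.last n) (Fin.castSucc i)) phi))
  | ball {n} (i : Fin n) {phi : SFml (n + 1)} : Restricted phi →
      Restricted (.all (.imp (.mem (Fin.last n) (Fin.castSucc i)) phi))

/-- The class of names all of whose truth values (hereditarily) lie in the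
subalgebra `A'`; this class represents `V^{A'}` inside `V^A`. -/
def HName.InSub {A : Type u} (A' : Set A) : HName A → Prop
  | .mk _ e v => (∀ i, v i ∈ A') ∧ ∀ i, HName.InSub A' (e i)

/-- `A'` is a subalgebra of the complete Heyting algebra `A` containing `1`,
closed under `∧`, `∨` and the Heyting implication of `A`, and closed under all
suprema and infima as computed in `A`. -/
structure IsCompleteSub (A : Type u) [Order.Frame A] (A' : Set A) : Prop where
  top_mem : ⊤ ∈ A'
  inf_mem : ∀ a ∈ A', ∀ b ∈ A', a ⊓ b ∈ A'
  sup_mem : ∀ a ∈ A', ∀ b ∈ A', a ⊔ b ∈ A'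
  himp_mem : ∀ a ∈ A', ∀ b ∈ A', a ⇨ b ∈ A'
  sSup_mem : ∀ S : Set A, S ⊆ A' → sSup S ∈ A'
  sInf_mem : ∀ S : Set A, S ⊆ A' → sInf S ∈ A'

section AuxLemmas

theorem Ordinal.nadd3_lt {a a' b b' c c' : Ordinal.{u}} (ha : a' < a) (hb : b' < b)
    (hc : c' < c) : max (max a' b') c' < max (max a b) c :=
  max_lt (max_lt (lt_max_of_lt_left (lt_max_of_lt_left ha))
    (lt_max_of_lt_left (lt_max_of_lt_right hb))) (lt_max_of_lt_right hc)

theorem Ordinal.nadd_perm (a b c : Ordinal.{u}) : max (max a b) c = max (max c b) a := by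
  simp only [max_comm, max_assoc, max_left_comm]

namespace HName

variable {A : Type u} [Order.Frame A]

theorem eqVal_def (ι1 κ1 : Type u) (e : ι1 → HName A) (a : ι1 → A) (f : κ1 → HName A) (b : κ1 → A) :
    eqVal (mk ι1 e a) (mk κ1 f b) =
      (⨅ i, a i ⇨ ⨆ j, b j ⊓ eqVal (f j) (e i)) ⊓
      (⨅ j, b j ⇨ ⨆ i, a i ⊓ eqVal (e i) (f j)) := by
  rw [eqVal]

theorem memVal_def (u v : HName A) :
    memVal u v = ⨆ j : v.ι, v.val j ⊓ eqVal (v.elts j) u := rfl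

theorem eqVal_eq (u v : HName A) :
    eqVal u v = (⨅ i, u.val i ⇨ memVal (u.elts i) v) ⊓
      (⨅ j, v.val j ⇨ memVal (v.elts j) u) := by
  cases u; cases v; rw [eqVal_def]; rfl

theorem eqVal_symm (u v : HName A) : eqVal u v = eqVal v u := by
  cases u; cases v; rw [eqVal_def, eqVal_def, inf_comm]

theorem eqVal_refl : ∀ u : HName A, eqVal u u = ⊤
  | mk ι1 e a => by
    rw [eqVal_def]
    have h : ∀ i, (a i ⇨ ⨆ j, a j ⊓ eqVal (e j) (e i)) = ⊤ := fun i => by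
      rw [himp_eq_top_iff]
      exact le_iSup_of_le i (by rw [eqVal_refl (e i)]; simp)
    simp [h]

theorem eqVal_trans : ∀ u v w : HName A, eqVal u v ⊓ eqVal v w ≤ eqVal u w
  | mk ι1 e a, mk κ1 f b, mk lam g c => by
    rw [eqVal_eq (mk ι1 e a) (mk lam g c)]
    simp only [HName.val, HName.elts, HName.ι]
    refine le_inf (le_iInf fun i => le_himp_iff.2 ?_) (le_iInf fun k => le_himp_iff.2 ?_)
    · have h1 : eqVal (mk ι1 e a) (mk κ1 f b) ⊓ a i ≤ memVal (e i) (mk κ1 f b) := by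
        refine le_trans (inf_le_inf_right _ ?_) himp_inf_le
        rw [eqVal_eq]
        exact inf_le_left.trans (iInf_le _ i)
      calc eqVal (mk ι1 e a) (mk κ1 f b) ⊓ eqVal (mk κ1 f b) (mk lam g c) ⊓ a i
          ≤ eqVal (mk κ1 f b) (mk lam g c) ⊓ memVal (e i) (mk κ1 f b) := by
            rw [inf_right_comm]
            exact inf_le_inf h1 le_rfl |>.trans_eq (inf_comm _ _)
        _ ≤ memVal (e i) (mk lam g c) := by
            rw [memVal_def (e i) (mk κ1 f b), inf_iSup_eq]
            refine iSup_le fun j => ?_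
            have h2 : eqVal (mk κ1 f b) (mk lam g c) ⊓ b j ≤ memVal (f j) (mk lam g c) := by
              refine le_trans (inf_le_inf_right _ ?_) himp_inf_le
              rw [eqVal_eq]
              exact inf_le_left.trans (iInf_le _ j)
            calc eqVal (mk κ1 f b) (mk lam g c) ⊓ (val (mk κ1 f b) j ⊓ eqVal (elts (mk κ1 f b) j) (e i))
                = (eqVal (mk κ1 f b) (mk lam g c) ⊓ b j) ⊓ eqVal (f j) (e i) := by
                  simp only [HName.val, HName.elts]; rw [inf_assoc]
              _ ≤ memVal (f j) (mk lam g c) ⊓ eqVal (f j) (e i) := inf_le_inf_right _ h2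
              _ ≤ memVal (e i) (mk lam g c) := by
                  rw [memVal_def (f j) (mk lam g c), iSup_inf_eq]
                  refine iSup_le fun k => ?_
                  simp only [HName.val, HName.elts]
                  calc c k ⊓ eqVal (g k) (f j) ⊓ eqVal (f j) (e i)
                      ≤ c k ⊓ (eqVal (g k) (f j) ⊓ eqVal (f j) (e i)) := by rw [inf_assoc]
                    _ ≤ c k ⊓ eqVal (g k) (e i) := by
                        refine inf_le_inf_left _ ?_
                        rw [eqVal_symm (g k) (f j), eqVal_symm (f j) (e i),
                          eqVal_symm (g k) (e i), inf_comm]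
                        exact eqVal_trans (e i) (f j) (g k)
                    _ ≤ _ := le_iSup (fun k => c k ⊓ eqVal (g k) (e i)) k
    · have h1 : eqVal (mk κ1 f b) (mk lam g c) ⊓ c k ≤ memVal (g k) (mk κ1 f b) := by
        refine le_trans (inf_le_inf_right _ ?_) himp_inf_le
        rw [eqVal_eq]
        exact inf_le_right.trans (iInf_le _ k)
      calc eqVal (mk ι1 e a) (mk κ1 f b) ⊓ eqVal (mk κ1 f b) (mk lam g c) ⊓ c k
          ≤ eqVal (mk ι1 e a) (mk κ1 f b) ⊓ memVal (g k) (mk κ1 f b) := by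
            rw [inf_assoc]
            exact inf_le_inf_left _ h1
        _ ≤ memVal (g k) (mk ι1 e a) := by
            rw [memVal_def (g k) (mk κ1 f b), inf_iSup_eq]
            refine iSup_le fun j => ?_
            have h2 : eqVal (mk ι1 e a) (mk κ1 f b) ⊓ b j ≤ memVal (f j) (mk ι1 e a) := by
              refine le_trans (inf_le_inf_right _ ?_) himp_inf_le
              rw [eqVal_eq]
              exact inf_le_right.trans (iInf_le _ j)
            calc eqVal (mk ι1 e a) (mk κ1 f b) ⊓ (val (mk κ1 f b) j ⊓ eqVal (elts (mk κ1 f b) j) (g k))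
                = (eqVal (mk ι1 e a) (mk κ1 f b) ⊓ b j) ⊓ eqVal (f j) (g k) := by
                  simp only [HName.val, HName.elts]; rw [inf_assoc]
              _ ≤ memVal (f j) (mk ι1 e a) ⊓ eqVal (f j) (g k) := inf_le_inf_right _ h2
              _ ≤ memVal (g k) (mk ι1 e a) := by
                  rw [memVal_def (f j) (mk ι1 e a), iSup_inf_eq]
                  refine iSup_le fun i => ?_
                  simp only [HName.val, HName.elts]
                  calc a i ⊓ eqVal (e i) (f j) ⊓ eqVal (f j) (g k)
                      ≤ a i ⊓ (eqVal (e i) (f j) ⊓ eqVal (f j) (g k)) := by rw [inf_assoc]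
                    _ ≤ a i ⊓ eqVal (e i) (g k) := inf_le_inf_left _ (eqVal_trans (e i) (f j) (g k))
                    _ ≤ _ := le_iSup (fun i => a i ⊓ eqVal (e i) (g k)) i
termination_by u v w => max (max u.rank v.rank) w.rank
decreasing_by
  all_goals exact Ordinal.nadd3_lt (rank_lt _ _ _) (rank_lt _ _ _) (rank_lt _ _ _)

end HName

end AuxLemmas

namespace HName
variable {A : Type u} [Order.Frame A]

theorem memVal_left_congr (u u' v : HName A) : eqVal u u' ⊓ memVal u v ≤ memVal u' v := by
  rw [memVal_def u v, inf_iSup_eq]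
  refine iSup_le fun k => ?_
  calc eqVal u u' ⊓ (v.val k ⊓ eqVal (v.elts k) u)
      ≤ v.val k ⊓ (eqVal (v.elts k) u ⊓ eqVal u u') := by
        rw [inf_comm (eqVal u u'), inf_assoc]
    _ ≤ v.val k ⊓ eqVal (v.elts k) u' := inf_le_inf_left _ (eqVal_trans _ _ _)
    _ ≤ memVal u' v := le_iSup (fun k => v.val k ⊓ eqVal (v.elts k) u') k

theorem memVal_right_congr (u v v' : HName A) : eqVal v v' ⊓ memVal u v ≤ memVal u v' := by
  rw [memVal_def u v, inf_iSup_eq]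
  refine iSup_le fun j => ?_
  have h1 : eqVal v v' ⊓ v.val j ≤ memVal (v.elts j) v' := by
    refine le_trans (inf_le_inf_right _ ?_) himp_inf_le
    rw [eqVal_eq]
    exact inf_le_left.trans (iInf_le _ j)
  calc eqVal v v' ⊓ (v.val j ⊓ eqVal (v.elts j) u)
      = (eqVal v v' ⊓ v.val j) ⊓ eqVal (v.elts j) u := by rw [inf_assoc]
    _ ≤ memVal (v.elts j) v' ⊓ eqVal (v.elts j) u := inf_le_inf_right _ h1
    _ ≤ eqVal (v.elts j) u ⊓ memVal (v.elts j) v' := inf_comm _ _ |>.le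
    _ ≤ memVal u v' := memVal_left_congr _ _ _

theorem memVal_congr (u u' v v' : HName A) :
    (eqVal u u' ⊓ eqVal v v') ⊓ memVal u v ≤ memVal u' v' := by
  calc (eqVal u u' ⊓ eqVal v v') ⊓ memVal u v
      ≤ eqVal u u' ⊓ (eqVal v v' ⊓ memVal u v) := by rw [inf_assoc]
    _ ≤ eqVal u u' ⊓ memVal u v' := inf_le_inf_left _ (memVal_right_congr _ _ _)
    _ ≤ memVal u' v' := memVal_left_congr _ _ _

theorem eqVal_congr (u u' v v' : HName A) :
    (eqVal u u' ⊓ eqVal v v') ⊓ eqVal u v ≤ eqVal u' v' := by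
  calc (eqVal u u' ⊓ eqVal v v') ⊓ eqVal u v
      ≤ eqVal v v' ⊓ (eqVal u u' ⊓ eqVal u v) := by
        rw [inf_comm (eqVal u u'), inf_assoc]
    _ ≤ eqVal v v' ⊓ (eqVal u' u ⊓ eqVal u v) := by rw [eqVal_symm u u']
    _ ≤ eqVal v v' ⊓ eqVal u' v := inf_le_inf_left _ (eqVal_trans _ _ _)
    _ ≤ eqVal u' v ⊓ eqVal v v' := inf_comm _ _ |>.le
    _ ≤ eqVal u' v' := eqVal_trans _ _ _

theorem val_le_memVal (u : HName A) (j : u.ι) : u.val j ≤ memVal (u.elts j) u := by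
  refine le_iSup_of_le j ?_
  rw [eqVal_refl]
  simp

theorem InSub.elts' {A' : Set A} : ∀ {u : HName A}, u.InSub A' → ∀ j, (u.elts j).InSub A'
  | mk _ _ _, h, j => h.2 j

end HName

theorem SFml.valIn_congr {A : Type u} [Order.Frame A] :
    ∀ {n : Nat} (phi : SFml n) (rho rho' : Fin n → HName A),
      (⨅ i, HName.eqVal (rho i) (rho' i)) ⊓ SFml.valIn A (fun _ => True) phi rho ≤
        SFml.valIn A (fun _ => True) phi rho'
  | _, .mem i j, rho, rho' => by
    simp only [SFml.valIn]
    refine le_trans (inf_le_inf_right _ ?_) (HName.memVal_congr _ _ _ _)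
    exact le_inf (iInf_le _ i) (iInf_le _ j)
  | _, .eq i j, rho, rho' => by
    simp only [SFml.valIn]
    refine le_trans (inf_le_inf_right _ ?_) (HName.eqVal_congr _ _ _ _)
    exact le_inf (iInf_le _ i) (iInf_le _ j)
  | _, .and phi psi, rho, rho' => by
    simp only [SFml.valIn]
    exact le_inf
      (le_trans (inf_le_inf_left _ inf_le_left) (valIn_congr phi rho rho'))
      (le_trans (inf_le_inf_left _ inf_le_right) (valIn_congr psi rho rho'))
  | _, .or phi psi, rho, rho' => by
    simp only [SFml.valIn, inf_sup_left]
    exact sup_le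
      (le_trans (valIn_congr phi rho rho') le_sup_left)
      (le_trans (valIn_congr psi rho rho') le_sup_right)
  | _, .imp phi psi, rho, rho' => by
    simp only [SFml.valIn]
    rw [le_himp_iff]
    set E := ⨅ i, HName.eqVal (rho i) (rho' i) with hEdef
    have hE : (⨅ i, HName.eqVal (rho' i) (rho i)) = E :=
      iInf_congr fun i => HName.eqVal_symm _ _
    have h1 : E ⊓ valIn A (fun _ => True) phi rho' ≤ valIn A (fun _ => True) phi rho := by
      rw [← hE]; exact valIn_congr phi rho' rho
    have h2 : E ⊓ (valIn A (fun _ => True) phi rho ⇨ valIn A (fun _ => True) psi rho) ⊓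
        valIn A (fun _ => True) phi rho' ≤ E ⊓ valIn A (fun _ => True) psi rho := by
      refine le_inf (inf_le_left.trans inf_le_left) ?_
      calc E ⊓ (valIn A (fun _ => True) phi rho ⇨ valIn A (fun _ => True) psi rho) ⊓
            valIn A (fun _ => True) phi rho'
          ≤ (valIn A (fun _ => True) phi rho ⇨ valIn A (fun _ => True) psi rho) ⊓
            (E ⊓ valIn A (fun _ => True) phi rho') := by
            rw [inf_comm E, inf_assoc]
        _ ≤ (valIn A (fun _ => True) phi rho ⇨ valIn A (fun _ => True) psi rho) ⊓
            valIn A (fun _ => True) phi rho := inf_le_inf_left _ h1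
        _ ≤ _ := himp_inf_le
    exact h2.trans (valIn_congr psi rho rho')
  | _, .ex phi, rho, rho' => by
    simp only [SFml.valIn, inf_iSup_eq]
    refine iSup_le fun v => le_iSup_of_le v ?_
    refine le_trans (inf_le_inf_right _ ?_) (valIn_congr phi (Fin.snoc rho v.1) (Fin.snoc rho' v.1))
    refine le_iInf fun i => ?_
    refine Fin.lastCases ?_ (fun k => ?_) i
    · simp [Fin.snoc_last, HName.eqVal_refl]
    · simp only [Fin.snoc_castSucc]
      exact iInf_le _ k
  | _, .all phi, rho, rho' => by
    simp only [SFml.valIn]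
    refine le_iInf fun v => ?_
    refine le_trans (inf_le_inf ?_ (iInf_le _ v))
      (valIn_congr phi (Fin.snoc rho v.1) (Fin.snoc rho' v.1))
    refine le_iInf fun i => ?_
    refine Fin.lastCases ?_ (fun k => ?_) i
    · simp [Fin.snoc_last, HName.eqVal_refl]
    · simp only [Fin.snoc_castSucc]
      exact iInf_le _ k

theorem SFml.valIn_snoc_congr {A : Type u} [Order.Frame A] {n : Nat} (phi : SFml (n + 1))
    (rho : Fin n → HName A) (v w : HName A) :
    HName.eqVal v w ⊓ SFml.valIn A (fun _ => True) phi (Fin.snoc rho v) ≤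
      SFml.valIn A (fun _ => True) phi (Fin.snoc rho w) := by
  refine le_trans (inf_le_inf_right _ ?_) (SFml.valIn_congr phi _ _)
  refine le_iInf fun i => ?_
  refine Fin.lastCases ?_ (fun k => ?_) i
  · simp [Fin.snoc_last]
  · simp [Fin.snoc_castSucc, HName.eqVal_refl]

/-- For a complete subalgebra `A' ⊆ A`, the name universe `V^{A'}` is contained
in `V^A`, and for every restricted negation-free sentence with name parameters
in `V^{A'}`, its truth value computed in `V^{A'}` coincides with its truth
value computed in `V^A`. -/
theorem subalgebra_absoluteness {A : Type u} [Order.Frame A] (A' : Set A)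
    (h : IsCompleteSub A A') :
    {u : HName A | u.InSub A'} ⊆ (Set.univ : Set (HName A)) ∧
      ∀ {n : Nat} (psi : SFml n), psi.Restricted →
        ∀ rho : Fin n → HName A, (∀ i, (rho i).InSub A') →
          SFml.valIn A (HName.InSub A') psi rho =
            SFml.valIn A (fun _ => True) psi rho := by
  refine ⟨Set.subset_univ _, ?_⟩
  intro n psi hres
  induction hres with
  | mem i j => intro rho _; rfl
  | eq i j => intro rho _; rfl
  | and h1 h2 ih1 ih2 =>
    intro rho hrho
    simp only [SFml.valIn, ih1 rho hrho, ih2 rho hrho]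
  | or h1 h2 ih1 ih2 =>
    intro rho hrho
    simp only [SFml.valIn, ih1 rho hrho, ih2 rho hrho]
  | imp h1 h2 ih1 ih2 =>
    intro rho hrho
    simp only [SFml.valIn, ih1 rho hrho, ih2 rho hrho]
  | @bex m i phi hphi ih =>
    intro rho hrho
    have hsub : ∀ v : HName A, v.InSub A' →
        ∀ k, ((Fin.snoc rho v : Fin (m + 1) → HName A) k).InSub A' := fun v hv k =>
      Fin.lastCases (by simpa using hv) (fun k' => by simpa using hrho k') k
    simp only [SFml.valIn, Fin.snoc_last, Fin.snoc_castSucc]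
    have hL : (⨆ v : {v : HName A // HName.InSub A' v},
          HName.memVal v.1 (rho i) ⊓ SFml.valIn A (HName.InSub A') phi (Fin.snoc rho v.1)) =
        ⨆ v : {v : HName A // HName.InSub A' v},
          HName.memVal v.1 (rho i) ⊓ SFml.valIn A (fun _ => True) phi (Fin.snoc rho v.1) :=
      iSup_congr fun v => by rw [ih _ (hsub v.1 v.2)]
    rw [hL]
    apply le_antisymm
    · exact iSup_le fun v => le_iSup_of_le ⟨v.1, trivial⟩ le_rfl
    · refine iSup_le fun v => ?_
      rw [HName.memVal_def, iSup_inf_eq]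
      refine iSup_le fun j => ?_
      calc (rho i).val j ⊓ HName.eqVal ((rho i).elts j) v.1 ⊓
            SFml.valIn A (fun _ => True) phi (Fin.snoc rho v.1)
          ≤ (rho i).val j ⊓ (HName.eqVal ((rho i).elts j) v.1 ⊓
            SFml.valIn A (fun _ => True) phi (Fin.snoc rho v.1)) := by rw [inf_assoc]
        _ ≤ (rho i).val j ⊓
            SFml.valIn A (fun _ => True) phi (Fin.snoc rho ((rho i).elts j)) := by
            refine inf_le_inf_left _ ?_
            rw [HName.eqVal_symm]
            exact SFml.valIn_snoc_congr phi rho v.1 ((rho i).elts j)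
        _ ≤ HName.memVal ((rho i).elts j) (rho i) ⊓
            SFml.valIn A (fun _ => True) phi (Fin.snoc rho ((rho i).elts j)) :=
            inf_le_inf_right _ (HName.val_le_memVal (rho i) j)
        _ ≤ _ := le_iSup_of_le ⟨(rho i).elts j, (hrho i).elts' j⟩ le_rfl
  | @ball m i phi hphi ih =>
    intro rho hrho
    have hsub : ∀ v : HName A, v.InSub A' →
        ∀ k, ((Fin.snoc rho v : Fin (m + 1) → HName A) k).InSub A' := fun v hv k =>
      Fin.lastCases (by simpa using hv) (fun k' => by simpa using hrho k') k
    simp only [SFml.valIn, Fin.snoc_last, Fin.snoc_castSucc]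
    have hL : (⨅ v : {v : HName A // HName.InSub A' v},
          HName.memVal v.1 (rho i) ⇨ SFml.valIn A (HName.InSub A') phi (Fin.snoc rho v.1)) =
        ⨅ v : {v : HName A // HName.InSub A' v},
          HName.memVal v.1 (rho i) ⇨ SFml.valIn A (fun _ => True) phi (Fin.snoc rho v.1) :=
      iInf_congr fun v => by rw [ih _ (hsub v.1 v.2)]
    rw [hL]
    apply le_antisymm
    · refine le_iInf fun v => le_himp_iff.2 ?_
      rw [HName.memVal_def, inf_iSup_eq]
      refine iSup_le fun j => ?_
      calc (⨅ w : {w : HName A // HName.InSub A' w},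
              HName.memVal w.1 (rho i) ⇨ SFml.valIn A (fun _ => True) phi (Fin.snoc rho w.1)) ⊓
            ((rho i).val j ⊓ HName.eqVal ((rho i).elts j) v.1)
          ≤ (HName.memVal ((rho i).elts j) (rho i) ⇨
              SFml.valIn A (fun _ => True) phi (Fin.snoc rho ((rho i).elts j))) ⊓
            (HName.memVal ((rho i).elts j) (rho i) ⊓ HName.eqVal ((rho i).elts j) v.1) :=
            inf_le_inf (iInf_le _ (⟨(rho i).elts j, (hrho i).elts' j⟩ : {w : HName A // HName.InSub A' w}))
              (inf_le_inf_right _ (HName.val_le_memVal (rho i) j))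
        _ ≤ SFml.valIn A (fun _ => True) phi (Fin.snoc rho ((rho i).elts j)) ⊓
            HName.eqVal ((rho i).elts j) v.1 := by
            rw [← inf_assoc]
            exact inf_le_inf_right _ himp_inf_le
        _ ≤ SFml.valIn A (fun _ => True) phi (Fin.snoc rho v.1) := by
            rw [inf_comm]
            exact SFml.valIn_snoc_congr phi rho ((rho i).elts j) v.1
    · exact le_iInf fun v => iInf_le _ (⟨v.1, trivial⟩ : {w : HName A // True})
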